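/- Let s ≥ 1 and m ≥ s be natural numbers, and let x : Fin m → ℝ^s be any m points in ℝ^s. Then the number of distinct Boolean vectors (1(⟨w, x₁⟩ ≥ 0), …, 1(⟨w, x_m⟩ ≥ 0)) realized as w ranges over ℝ^s is at most (e·m/s)^s. -/

import Mathlib

open scoped BigOperators

/-- The set of dichotomies induced on the points `x` by homogeneous halfspaces with
normal vectors ranging over `W`. -/
def dichotomies {p m : ℕ} (W : Set (Fin p → ℝ)) (x : Fin m → (Fin p → ℝ)) :
    Set (Fin m → Bool) :=
  {b | ∃ w ∈ W, ∀ i, b i = decide (0 ≤ ∑ k, w k * x i k)}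

/-- Numeric bound: `∑_{k ≤ s} C(m,k) ≤ (e·m/s)^s` for `1 ≤ s ≤ m`. -/
lemma sum_choose_le_aux (s m : ℕ) (hs : 1 ≤ s) (hm : s ≤ m) :
    (∑ k ∈ Finset.Iic s, (m.choose k : ℝ)) ≤ (Real.exp 1 * m / s) ^ s := by
  have hm0 : (0:ℝ) < m := by
    have : (1:ℕ) ≤ m := le_trans hs hm
    exact_mod_cast Nat.lt_of_lt_of_le Nat.zero_lt_one this
  have hs0 : (0:ℝ) < s := by exact_mod_cast hs
  set r : ℝ := (s:ℝ) / m with hr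
  have hr0 : 0 < r := div_pos hs0 hm0
  have hr1 : r ≤ 1 := div_le_one_of_le₀ (by exact_mod_cast hm) hm0.le
  have hIic : Finset.Iic m = Finset.range (m+1) := by
    ext k; simp [Nat.lt_succ_iff]
  have key : (∑ k ∈ Finset.Iic s, (m.choose k : ℝ)) * r ^ s ≤ Real.exp 1 ^ s := by
    calc (∑ k ∈ Finset.Iic s, (m.choose k:ℝ)) * r^s
        = ∑ k ∈ Finset.Iic s, (m.choose k:ℝ) * r^s := Finset.sum_mul _ _ _
      _ ≤ ∑ k ∈ Finset.Iic s, (m.choose k:ℝ) * r^k := by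
          apply Finset.sum_le_sum; intro k hk
          have : r^s ≤ r^k := pow_le_pow_of_le_one hr0.le hr1 (Finset.mem_Iic.1 hk)
          exact mul_le_mul_of_nonneg_left this (by positivity)
      _ ≤ ∑ k ∈ Finset.Iic m, (m.choose k:ℝ) * r^k :=
          Finset.sum_le_sum_of_subset_of_nonneg (Finset.Iic_subset_Iic.2 hm)
            (fun k _ _ => by positivity)
      _ = (r + 1)^m := by
          rw [hIic, add_pow]
          apply Finset.sum_congr rfl
          intro k _; ring
      _ ≤ Real.exp r ^ m := by
          apply pow_le_pow_left₀ (by positivity)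
          have := Real.add_one_le_exp r
          linarith
      _ = Real.exp ((m:ℝ) * r) := by rw [Real.exp_nat_mul]
      _ = Real.exp s := by
          congr 1; rw [hr]; field_simp [hm0.ne']
      _ = Real.exp 1 ^ s := by
          rw [← Real.exp_nat_mul]; ring_nf
  have hrs : (0:ℝ) < r ^ s := by positivity
  rw [← le_div_iff₀ hrs] at key
  calc (∑ k ∈ Finset.Iic s, (m.choose k : ℝ)) ≤ Real.exp 1 ^ s / r ^ s := key
    _ = (Real.exp 1 / r) ^ s := (div_pow _ _ _).symm
    _ = (Real.exp 1 * m / s) ^ s := by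
        congr 1; rw [hr]; field_simp

/-- If a nontrivial relation `∑_{i ∈ t} G i • x i = 0` has a positive coefficient, then `t`
cannot be fully separated by halfspaces. -/
lemma no_pos_rel (s m : ℕ) (x : Fin m → Fin s → ℝ) (t : Finset (Fin m))
    (ht : ∀ u' ⊆ t, ∃ w : Fin s → ℝ, ∀ i ∈ t, (i ∈ u' ↔ 0 ≤ ∑ k, w k * x i k))
    (G : Fin m → ℝ) (hrel : ∀ k, ∑ i ∈ t, G i * x i k = 0)
    (i0 : Fin m) (hi0 : i0 ∈ t) (hpos : 0 < G i0) : False := by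
  obtain ⟨w, hw⟩ := ht (t.filter (fun i => G i < 0)) (Finset.filter_subset _ _)
  have hterm : ∀ i ∈ t, G i * (∑ k, w k * x i k) ≤ 0 := by
    intro i hi
    rcases lt_trichotomy (G i) 0 with h | h | h
    · have : 0 ≤ ∑ k, w k * x i k := (hw i hi).1 (Finset.mem_filter.2 ⟨hi, h⟩)
      exact mul_nonpos_of_nonpos_of_nonneg h.le this
    · simp [h]
    · have : ¬ (0 ≤ ∑ k, w k * x i k) := by
        intro hc
        have := (hw i hi).2 hc
        exact absurd (Finset.mem_filter.1 this).2 (not_lt.2 h.le)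
      push_neg at this
      exact (mul_neg_of_pos_of_neg h this).le
  have hstrict : G i0 * (∑ k, w k * x i0 k) < 0 := by
    have : ¬ (0 ≤ ∑ k, w k * x i0 k) := by
      intro hc
      have := (hw i0 hi0).2 hc
      exact absurd (Finset.mem_filter.1 this).2 (not_lt.2 hpos.le)
    push_neg at this
    exact mul_neg_of_pos_of_neg hpos this
  have hsum : ∑ i ∈ t, G i * (∑ k, w k * x i k) = 0 := by
    have : ∑ i ∈ t, G i * (∑ k, w k * x i k)
        = ∑ k, w k * (∑ i ∈ t, G i * x i k) := by
      simp_rw [Finset.mul_sum]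
      rw [Finset.sum_comm]
      apply Finset.sum_congr rfl; intro k _
      apply Finset.sum_congr rfl; intro i _; ring
    rw [this]
    simp [hrel]
  have : ∑ i ∈ t, G i * (∑ k, w k * x i k) < 0 := by
    calc ∑ i ∈ t, G i * (∑ k, w k * x i k) < ∑ i ∈ t, (0:ℝ) :=
      Finset.sum_lt_sum hterm ⟨i0, hi0, hstrict⟩
    _ = 0 := by simp
  linarith

/-- A set of indices shattered by homogeneous halfspaces in `ℝ^s` has at most `s` elements. -/
lemma shattered_card_le (s m : ℕ) (x : Fin m → Fin s → ℝ) (t : Finset (Fin m))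
    (ht : ∀ u' ⊆ t, ∃ w : Fin s → ℝ, ∀ i ∈ t, (i ∈ u' ↔ 0 ≤ ∑ k, w k * x i k)) :
    t.card ≤ s := by
  by_contra hlt
  push_neg at hlt
  have hnli : ¬ LinearIndependent ℝ (fun i : t => x i) := by
    intro h
    have := h.fintype_card_le_finrank
    rw [Module.finrank_fin_fun, Fintype.card_coe] at this
    omega
  obtain ⟨g, hg0, i0, hgi0⟩ := Fintype.not_linearIndependent_iff.1 hnli
  classical
  set G : Fin m → ℝ := fun i => if h : i ∈ t then g ⟨i, h⟩ else 0 with hG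
  have hGrel : ∀ k, ∑ i ∈ t, G i * x i k = 0 := by
    intro k
    have h1 : ∑ i ∈ t, G i * x i k = ∑ i ∈ t.attach, g i * x i k := by
      rw [← Finset.sum_attach t (fun i => G i * x i k)]
      apply Finset.sum_congr rfl; intro i _
      simp [hG, i.2]
    have h2 : ∑ i ∈ t.attach, g i * x (↑i) k = 0 := by
      have := congrFun hg0 k
      simpa [Finset.sum_apply] using this
    rw [h1, h2]
  rcases hgi0.lt_or_gt with h | h
  · refine no_pos_rel s m x t ht (fun i => -G i) (fun k => ?_) i0 i0.2 ?_
    · have := hGrel k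
      rw [← neg_eq_zero] at this
      rw [← this, ← Finset.sum_neg_distrib]
      apply Finset.sum_congr rfl; intro i _; ring
    · simp only [hG, dif_pos i0.2, neg_pos]
      simpa using h
  · refine no_pos_rel s m x t ht G hGrel i0 i0.2 ?_
    simp only [hG, dif_pos i0.2]
    simpa using h

/-- For `1 ≤ s ≤ m` and any `m` points in ℝ^s, the number of dichotomies
realized by homogeneous halfspaces `x ↦ 1(⟨w, x⟩ ≥ 0)`, `w ∈ ℝ^s`, is at most
`(e·m/s)^s`. -/
theorem stmt6 (s m : ℕ) (hs : 1 ≤ s) (hm : s ≤ m) (x : Fin m → (Fin s → ℝ)) :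
    ((dichotomies (Set.univ : Set (Fin s → ℝ)) x).ncard : ℝ)
      ≤ (Real.exp 1 * m / s) ^ s := by
  classical
  have hfin : (dichotomies (Set.univ : Set (Fin s → ℝ)) x).Finite := Set.toFinite _
  set D := hfin.toFinset with hD
  set 𝒜 : Finset (Finset (Fin m)) :=
    D.image (fun b => Finset.univ.filter (fun i => b i = true)) with h𝒜def
  have hinj : Set.InjOn (fun b : Fin m → Bool => Finset.univ.filter (fun i => b i = true)) D := by
    intro b _ c _ h
    funext i
    simp only at h
    have : i ∈ Finset.univ.filter (fun i => b i = true)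
        ↔ i ∈ Finset.univ.filter (fun i => c i = true) := by rw [h]
    simpa using this
  have hcard : (dichotomies (Set.univ : Set (Fin s → ℝ)) x).ncard = 𝒜.card := by
    rw [Set.ncard_eq_toFinset_card _ hfin, h𝒜def, Finset.card_image_of_injOn hinj]
  have hmem : ∀ u ∈ 𝒜, ∃ w : Fin s → ℝ, ∀ i, (i ∈ u ↔ 0 ≤ ∑ k, w k * x i k) := by
    intro u hu
    rw [h𝒜def, Finset.mem_image] at hu
    obtain ⟨b, hb, rfl⟩ := hu
    rw [hD, Set.Finite.mem_toFinset] at hb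
    obtain ⟨w, -, hw⟩ := hb
    refine ⟨w, fun i => ?_⟩
    simp [hw i]
  have hvc : 𝒜.vcDim ≤ s := by
    apply Finset.sup_le
    intro t ht
    rw [Finset.mem_shatterer] at ht
    apply shattered_card_le
    intro u' hu'
    obtain ⟨u, hu, htu⟩ := ht hu'
    obtain ⟨w, hw⟩ := hmem u hu
    refine ⟨w, fun i hi => ?_⟩
    rw [← hw i, ← htu, Finset.mem_inter]
    tauto
  have h1 : 𝒜.card ≤ ∑ k ∈ Finset.Iic s, m.choose k := by
    calc 𝒜.card ≤ 𝒜.shatterer.card := Finset.card_le_card_shatterer 𝒜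
      _ ≤ ∑ k ∈ Finset.Iic 𝒜.vcDim, (Fintype.card (Fin m)).choose k :=
          Finset.card_shatterer_le_sum_vcDim
      _ ≤ ∑ k ∈ Finset.Iic s, m.choose k := by
          rw [Fintype.card_fin]
          exact Finset.sum_le_sum_of_subset (Finset.Iic_subset_Iic.2 hvc)
  calc ((dichotomies (Set.univ : Set (Fin s → ℝ)) x).ncard : ℝ)
      = (𝒜.card : ℝ) := by exact_mod_cast hcard
    _ ≤ (∑ k ∈ Finset.Iic s, m.choose k : ℕ) := by exact_mod_cast h1
    _ = ∑ k ∈ Finset.Iic s, (m.choose k : ℝ) := by push_cast; ring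
    _ ≤ (Real.exp 1 * m / s) ^ s := sum_choose_le_aux s m hs hm
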